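/- For all real numbers α, β, x, y and every n ∈ ℕ, the generalized Euler matrices satisfy the product formula 𝓔^{(α+β)}(x+y) = 𝓔^{(α)}(x)·𝓔^{(β)}(y) = 𝓔^{(β)}(x)·𝓔^{(α)}(y) = 𝓔^{(α)}(y)·𝓔^{(β)}(x). -/

import Mathlib

noncomputable section

open FormalMultilinearSeries


lemma ofScalars_coeff (d : ℕ → ℝ) (n : ℕ) : (ofScalars ℝ d).coeff n = d n := by
  show (ofScalars ℝ d) n 1 = d n
  have : (1 : Fin n → ℝ) = fun _ => (1:ℝ) := rfl
  rw [this, ofScalars_apply_eq]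
  simp

lemma coeff_unique {c c' : ℕ → ℝ} {f : ℝ → ℝ}
    (h : ∀ z : ℝ, |z| < Real.pi → HasSum (fun k => c k * z ^ k) (f z))
    (h' : ∀ z : ℝ, |z| < Real.pi → HasSum (fun k => c' k * z ^ k) (f z)) : c = c' := by
  have key : ∀ (d : ℕ → ℝ), (∀ z : ℝ, |z| < Real.pi → HasSum (fun k => d k * z ^ k) (f z)) →
      HasFPowerSeriesAt f (ofScalars ℝ d) 0 := by
    intro d hd
    refine ⟨ENNReal.ofReal Real.pi, ?_, by simp [Real.pi_pos], ?_⟩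
    · refine ENNReal.le_of_forall_nnreal_lt (fun r hr => ?_)
      apply le_radius_of_summable_norm
      have hrπ : |(r : ℝ)| < Real.pi := by
        rw [abs_of_nonneg r.coe_nonneg]
        exact (ENNReal.lt_ofReal_iff_toReal_lt ENNReal.coe_ne_top).mp hr
      have h1 := ((hd r hrπ).summable).abs
      refine Summable.congr h1 (fun n => ?_)
      rw [norm_apply_eq_norm_coef, ofScalars_coeff, abs_mul, Real.norm_eq_abs, abs_pow,
        abs_of_nonneg r.coe_nonneg]
    · intro z hz
      rw [Metric.emetric_ball, Metric.mem_ball, dist_zero_right,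
        Real.norm_eq_abs] at hz
      have h3 : ∀ n, (ofScalars ℝ d n fun _ => z) = d n * z ^ n := by
        intro n; rw [ofScalars_apply_eq, smul_eq_mul]
      simpa [h3] using hd z hz
  have := (key c h).eq_formalMultilinearSeries (key c' h')
  exact ofScalars_series_injective ℝ ℝ this


/-- `E α x k` is the generalized Euler polynomial `E_k^{(α)}(x)`, characterized by the
generating function `(2/(e^z+1))^α e^{xz} = Σ_k E_k^{(α)}(x) z^k / k!` for `|z| < π`. -/
def IsGenEulerFamily (E : ℝ → ℝ → ℕ → ℝ) : Prop :=
  ∀ α x z : ℝ, |z| < Real.pi →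
    HasSum (fun k : ℕ => E α x k * z ^ k / (Nat.factorial k : ℝ))
      ((2 / (Real.exp z + 1)) ^ α * Real.exp (x * z))

/-- The generalized `(n+1)×(n+1)` Euler matrix `𝓔^{(α)}(x)`, with `(i,j)` entry
`C(i,j) E_{i-j}^{(α)}(x)` (which is `0` for `j > i` since then `C(i,j) = 0`). -/
def genEulerMatrix (E : ℝ → ℝ → ℕ → ℝ) (n : ℕ) (α x : ℝ) :
    Matrix (Fin (n + 1)) (Fin (n + 1)) ℝ :=
  Matrix.of fun i j => (Nat.choose (i : ℕ) (j : ℕ) : ℝ) * E α x ((i : ℕ) - (j : ℕ))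

lemma euler_add {E : ℝ → ℝ → ℕ → ℝ} (hE : IsGenEulerFamily E) (α β x y : ℝ) (k : ℕ) :
    E (α + β) (x + y) k = ∑ m ∈ Finset.range (k + 1),
      (Nat.choose k m : ℝ) * E α x (k - m) * E β y m := by
  set a : ℕ → ℝ := fun j => E α x j / (Nat.factorial j : ℝ) with ha
  set b : ℕ → ℝ := fun j => E β y j / (Nat.factorial j : ℝ) with hb
  set c : ℕ → ℝ := fun j => E (α + β) (x + y) j / (Nat.factorial j : ℝ) with hc
  set c' : ℕ → ℝ := fun j => ∑ m ∈ Finset.range (j + 1), a m * b (j - m) with hc'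
  set f : ℝ → ℝ := fun z => (2 / (Real.exp z + 1)) ^ (α + β) * Real.exp ((x + y) * z) with hf
  have hcc' : c = c' := by
    apply coeff_unique (f := f)
    · intro z hz
      simpa [hc, div_mul_eq_mul_div] using hE (α + β) (x + y) z hz
    · intro z hz
      have hF := hE α x z hz
      have hG := hE β y z hz
      have hFa : HasSum (fun j => a j * z ^ j) ((2 / (Real.exp z + 1)) ^ α * Real.exp (x * z)) := by
        simpa [ha, div_mul_eq_mul_div] using hF
      have hGb : HasSum (fun j => b j * z ^ j) ((2 / (Real.exp z + 1)) ^ β * Real.exp (y * z)) := by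
        simpa [hb, div_mul_eq_mul_div] using hG
      have hfn : Summable fun j => ‖a j * z ^ j‖ := by
        simpa only [Real.norm_eq_abs] using hFa.summable.abs
      have hgn : Summable fun j => ‖b j * z ^ j‖ := by
        simpa only [Real.norm_eq_abs] using hGb.summable.abs
      have hsum : Summable fun n => ∑ m ∈ Finset.range (n + 1), (a m * z ^ m) * (b (n - m) * z ^ (n - m)) :=
        (summable_norm_sum_mul_range_of_summable_norm hfn hgn).of_norm
      have htsum := tsum_mul_tsum_eq_tsum_sum_range_of_summable_norm hfn hgn
      rw [hFa.tsum_eq, hGb.tsum_eq] at htsum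
      have hprod : ((2 / (Real.exp z + 1)) ^ α * Real.exp (x * z)) *
          ((2 / (Real.exp z + 1)) ^ β * Real.exp (y * z))
          = (2 / (Real.exp z + 1)) ^ (α + β) * Real.exp ((x + y) * z) := by
        have h2 : (0:ℝ) < 2 / (Real.exp z + 1) := by positivity
        rw [Real.rpow_add h2, add_mul, Real.exp_add]
        ring
      have : HasSum (fun n => ∑ m ∈ Finset.range (n + 1), (a m * z ^ m) * (b (n - m) * z ^ (n - m))) (f z) := by
        rw [hsum.hasSum_iff, ← htsum]
        exact hprod
      have heq : ∀ n, ∑ m ∈ Finset.range (n + 1), (a m * z ^ m) * (b (n - m) * z ^ (n - m))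
          = c' n * z ^ n := by
        intro n
        rw [hc', Finset.sum_mul]
        refine Finset.sum_congr rfl (fun m hm => ?_)
        have hmn : m ≤ n := Nat.lt_succ_iff.mp (Finset.mem_range.mp hm)
        rw [mul_mul_mul_comm, ← pow_add]
        congr 2
        omega
      simpa only [heq] using this
  have hfac : ∀ j : ℕ, ((Nat.factorial j : ℝ)) ≠ 0 :=
    fun j => Nat.cast_ne_zero.mpr (Nat.factorial_ne_zero j)
  have h1 : E (α + β) (x + y) k = (Nat.factorial k : ℝ) * c' k := by
    rw [← hcc', hc]
    field_simp
  rw [h1, hc', Finset.mul_sum]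
  have h2 : ∀ m ∈ Finset.range (k + 1),
      (Nat.factorial k : ℝ) * (a m * b (k - m)) =
        (Nat.choose k m : ℝ) * E α x m * E β y (k - m) := by
    intro m hm
    have hmk : m ≤ k := Nat.lt_succ_iff.mp (Finset.mem_range.mp hm)
    rw [Nat.cast_choose ℝ hmk, ha, hb]
    field_simp
  rw [Finset.sum_congr rfl h2, ← Finset.sum_range_reflect]
  refine Finset.sum_congr rfl (fun m hm => ?_)
  have hmk : m ≤ k := Nat.lt_succ_iff.mp (Finset.mem_range.mp hm)
  have e1 : k + 1 - 1 - m = k - m := by omega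
  have e2 : k - (k - m) = m := by omega
  rw [e1, Nat.choose_symm hmk, e2]

lemma euler_matrix_mul {E : ℝ → ℝ → ℕ → ℝ} (hE : IsGenEulerFamily E)
    (n : ℕ) (α β x y : ℝ) :
    genEulerMatrix E n (α + β) (x + y) = genEulerMatrix E n α x * genEulerMatrix E n β y := by
  ext i j
  rw [Matrix.mul_apply]
  simp only [genEulerMatrix, Matrix.of_apply]
  rw [Fin.sum_univ_eq_sum_range (fun l =>
    (Nat.choose (i : ℕ) l : ℝ) * E α x ((i : ℕ) - l) * ((Nat.choose l (j : ℕ) : ℝ) * E β y (l - (j : ℕ))))]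
  rcases lt_or_ge (i : ℕ) (j : ℕ) with hij | hij
  · rw [Nat.choose_eq_zero_of_lt hij, Nat.cast_zero, zero_mul]
    refine (Finset.sum_eq_zero fun l hl => ?_).symm
    rcases lt_or_ge (i : ℕ) l with h | h
    · rw [Nat.choose_eq_zero_of_lt h, Nat.cast_zero, zero_mul, zero_mul]
    · rw [Nat.choose_eq_zero_of_lt (lt_of_le_of_lt h hij), Nat.cast_zero, zero_mul, mul_zero]
  · -- j ≤ i
    have hin : (i : ℕ) < n + 1 := i.isLt
    -- restrict sum to range (i+1)
    rw [← Finset.sum_subset (Finset.range_subset_range.mpr (by omega : (i : ℕ) + 1 ≤ n + 1))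
      (fun l _ hl => by
        have : (i : ℕ) < l := by
          simp only [Finset.mem_range, not_lt] at hl; omega
        rw [Nat.choose_eq_zero_of_lt this, Nat.cast_zero, zero_mul, zero_mul])]
    -- drop l < j
    rw [Finset.range_eq_Ico, ← Finset.sum_subset
      (Finset.Ico_subset_Ico (Nat.zero_le _) le_rfl : Finset.Ico (j : ℕ) ((i : ℕ) + 1) ⊆ Finset.Ico 0 ((i : ℕ) + 1))
      (fun l hl hl' => by
        have : l < (j : ℕ) := by
          simp only [Finset.mem_Ico] at hl hl'; omega
        rw [Nat.choose_eq_zero_of_lt this, Nat.cast_zero, zero_mul, mul_zero])]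
    rw [Finset.sum_Ico_eq_sum_range]
    have hkk : (i : ℕ) + 1 - (j : ℕ) = ((i : ℕ) - (j : ℕ)) + 1 := by omega
    rw [hkk, euler_add hE, Finset.mul_sum]
    refine Finset.sum_congr rfl (fun m hm => ?_)
    have hmk : m ≤ (i : ℕ) - (j : ℕ) := Nat.lt_succ_iff.mp (Finset.mem_range.mp hm)
    have h1 : (i : ℕ) - ((j : ℕ) + m) = (i : ℕ) - (j : ℕ) - m := by omega
    have h2 : (j : ℕ) + m - (j : ℕ) = m := by omega
    have h3 : ((i : ℕ)).choose ((j : ℕ) + m) * ((j : ℕ) + m).choose (j : ℕ)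
        = ((i : ℕ)).choose (j : ℕ) * (((i : ℕ) - (j : ℕ)).choose m) := by
      have := Nat.choose_mul (n := (i : ℕ)) (show (j : ℕ) ≤ (j : ℕ) + m by omega)
      simpa [Nat.add_sub_cancel_left] using this
    rw [h1, h2]
    have := congrArg (fun t : ℕ => (t : ℝ)) h3
    push_cast at this
    symm
    calc (↑((i : ℕ).choose ((j : ℕ) + m)) : ℝ) * E α x ((i:ℕ) - (j:ℕ) - m) *
          (↑(((j:ℕ) + m).choose (j:ℕ)) * E β y m)
        = (↑((i : ℕ).choose ((j : ℕ) + m)) * ↑(((j:ℕ) + m).choose (j:ℕ)) : ℝ) *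
          (E α x ((i:ℕ) - (j:ℕ) - m) * E β y m) := by ring
      _ = (↑((i : ℕ).choose (j : ℕ)) * ↑(((i:ℕ) - (j:ℕ)).choose m) : ℝ) *
          (E α x ((i:ℕ) - (j:ℕ) - m) * E β y m) := by rw [this]
      _ = ↑((i : ℕ).choose (j : ℕ)) * (↑(((i:ℕ) - (j:ℕ)).choose m) * E α x ((i:ℕ) - (j:ℕ) - m) * E β y m) := by ring

theorem euler_matrix_product (E : ℝ → ℝ → ℕ → ℝ) (hE : IsGenEulerFamily E)
    (n : ℕ) (α β x y : ℝ) :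
    genEulerMatrix E n (α + β) (x + y) = genEulerMatrix E n α x * genEulerMatrix E n β y ∧
    genEulerMatrix E n (α + β) (x + y) = genEulerMatrix E n β x * genEulerMatrix E n α y ∧
    genEulerMatrix E n (α + β) (x + y) = genEulerMatrix E n α y * genEulerMatrix E n β x := by
  refine ⟨euler_matrix_mul hE n α β x y, ?_, ?_⟩
  · rw [add_comm α β]
    exact euler_matrix_mul hE n β α x y
  · rw [add_comm x y]
    exact euler_matrix_mul hE n α β y x
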